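/- Let G=(V,E) be a finite undirected graph, let k ≥ 3, and let s,t ∈ V be distinct. Let (V₁,…,V_k) be a partition of V into k nonempty parts with s ∈ V_{k−1} and t ∈ V_k whose cut value γ(V₁,…,V_k) is minimum among all partitions of V into k nonempty parts in which s and t lie in different parts. Let μ be the minimum of γ(W₁,…,W_{k−1}) over all partitions of V into k−1 nonempty parts in which s and t lie in the same part. Then γ(V₁,…,V_{k−2}, V_{k−1} ∪ V_k) ≤ 2μ. -/

import Mathlib

/-- The cut value of a family of parts `P : ι → Set V` in an undirected graph `G`:
the number of edges of `G` whose two endpoints do not lie in a common part. -/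
noncomputable def cutVal {V ι : Type*} (G : SimpleGraph V) (P : ι → Set V) : ℕ :=
  {e : Sym2 V | e ∈ G.edgeSet ∧ ¬ ∃ i, ∀ v ∈ e, v ∈ P i}.ncard

lemma cutVal_reindex {V ι κ : Type*} (G : SimpleGraph V) (e : ι ≃ κ) (P : κ → Set V) :
    cutVal G (fun i => P (e i)) = cutVal G P := by
  unfold cutVal
  congr 1
  ext x
  simp only [Set.mem_setOf_eq, and_congr_right_iff, not_iff_not]
  intro _
  constructor
  · rintro ⟨i, hi⟩; exact ⟨e i, hi⟩
  · rintro ⟨j, hj⟩; exact ⟨e.symm j, by simpa using hj⟩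

theorem stmt_19 {V : Type*} [Fintype V] (G : SimpleGraph V) (k : ℕ) (hk : 3 ≤ k)
    (s t : V) (hst : s ≠ t)
    (P : Fin (k - 2) → Set V) (Vs Vt : Set V)
    (hPne : ∀ i, (P i).Nonempty) (hVs : Vs.Nonempty) (hVt : Vt.Nonempty)
    (hs : s ∈ Vs) (ht : t ∈ Vt)
    (hdisjP : ∀ i j, i ≠ j → Disjoint (P i) (P j))
    (hdisjPs : ∀ i, Disjoint (P i) Vs) (hdisjPt : ∀ i, Disjoint (P i) Vt)
    (hdisjst : Disjoint Vs Vt)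
    (hcover : (⋃ i, P i) ∪ Vs ∪ Vt = Set.univ)
    (hmin : ∀ Q : Fin k → Set V,
      (∀ i, (Q i).Nonempty) → (∀ i j, i ≠ j → Disjoint (Q i) (Q j)) →
      (⋃ i, Q i) = Set.univ → (∀ i, ¬ (s ∈ Q i ∧ t ∈ Q i)) →
      cutVal G (Sum.elim P (fun b : Bool => if b then Vt else Vs)) ≤ cutVal G Q) :
    cutVal G (fun o : Option (Fin (k - 2)) => o.elim (Vs ∪ Vt) P) ≤
      2 * sInf {n : ℕ | ∃ W : Fin (k - 1) → Set V,
        (∀ i, (W i).Nonempty) ∧ (∀ i j, i ≠ j → Disjoint (W i) (W j)) ∧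
        (⋃ i, W i) = Set.univ ∧ (∃ i, s ∈ W i ∧ t ∈ W i) ∧
        cutVal G W = n} := by
  classical
  set F : Fin (k - 2) ⊕ Bool → Set V := Sum.elim P (fun b : Bool => if b then Vt else Vs)
    with hFdef
  set R : Option (Fin (k - 2)) → Set V := fun o : Option (Fin (k - 2)) => o.elim (Vs ∪ Vt) P
    with hRdef
  set S : Set ℕ := {n : ℕ | ∃ W : Fin (k - 1) → Set V,
        (∀ i, (W i).Nonempty) ∧ (∀ i j, i ≠ j → Disjoint (W i) (W j)) ∧
        (⋃ i, W i) = Set.univ ∧ (∃ i, s ∈ W i ∧ t ∈ W i) ∧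
        cutVal G W = n} with hSdef
  have hsnt : s ∉ Vt := fun h => (Set.disjoint_left.mp hdisjst hs) h
  have htns : t ∉ Vs := fun h => (Set.disjoint_left.mp hdisjst h) ht
  have h1 : k - 1 = (k - 2) + 1 := by omega
  have h2 : k = (k - 1) + 1 := by omega
  -- R is pairwise disjoint and covers
  have hRdisj : ∀ o1 o2 : Option (Fin (k - 2)), o1 ≠ o2 → Disjoint (R o1) (R o2) := by
    rintro (_ | i) (_ | j) h
    · exact absurd rfl h
    · exact ((hdisjPs j).symm.union_left (hdisjPt j).symm)
    · exact ((hdisjPs i).union_right (hdisjPt i))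
    · exact hdisjP i j (fun hij => h (by rw [hij]))
  have hRcover : (⋃ o, R o) = Set.univ := by
    rw [← hcover]
    ext x
    simp only [Set.mem_iUnion, Option.exists, Set.mem_union, hRdef, Option.elim]
    tauto
  have hRne : ∀ o, (R o).Nonempty := by
    rintro (_ | j)
    · exact ⟨s, Or.inl hs⟩
    · exact hPne j
  -- S is nonempty
  let eqv : Fin (k - 1) ≃ Option (Fin (k - 2)) := (finCongr h1).trans (finSuccEquiv (k - 2))
  have hSne : S.Nonempty := by
    refine ⟨cutVal G R, fun i => R (eqv i), fun i => hRne _, ?_, ?_, ?_,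
      cutVal_reindex G eqv R⟩
    · intro i j hij
      exact hRdisj _ _ (fun h => hij (eqv.injective h))
    · rw [eqv.surjective.iUnion_comp]; exact hRcover
    · refine ⟨eqv.symm none, ?_, ?_⟩
      · show s ∈ R (eqv (eqv.symm none))
        rw [eqv.apply_symm_apply]; exact Or.inl hs
      · show t ∈ R (eqv (eqv.symm none))
        rw [eqv.apply_symm_apply]; exact Or.inr ht
  set μ := sInf S with hμdef
  obtain ⟨W, hWne, hWdisj, hWcover, ⟨i0, hsW0, htW0⟩, hWμ⟩ := Nat.sInf_mem hSne
  -- the relevant edge sets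
  set Γ : Set (Sym2 V) := {e : Sym2 V | e ∈ G.edgeSet ∧ ¬ ∃ i, ∀ v ∈ e, v ∈ F i} with hΓdef
  set m : Set (Sym2 V) := {e : Sym2 V | e ∈ G.edgeSet ∧ ¬ ∃ o, ∀ v ∈ e, v ∈ R o} with hmdef
  set WX : Set (Sym2 V) := {e : Sym2 V | e ∈ G.edgeSet ∧ ¬ ∃ i, ∀ v ∈ e, v ∈ W i} with hWXdef
  have hWXμ : WX.ncard = μ := hWμ
  -- key bound: for any X separating t from s, Γ.ncard ≤ μ + |A X|
  have key : ∀ X : Set V, t ∈ X → s ∉ X →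
      Γ.ncard ≤ μ + {e : Sym2 V | e ∈ G.edgeSet ∧ (∀ v ∈ e, v ∈ W i0) ∧
        (∃ v ∈ e, v ∈ X) ∧ (∃ v ∈ e, v ∉ X)}.ncard := by
    intro X htX hsX
    set A := {e : Sym2 V | e ∈ G.edgeSet ∧ (∀ v ∈ e, v ∈ W i0) ∧
        (∃ v ∈ e, v ∈ X) ∧ (∃ v ∈ e, v ∉ X)} with hAdef
    set Q' : Option (Fin (k - 1)) → Set V :=
      fun o => o.elim (W i0 ∩ X) (Function.update W i0 (W i0 \ X)) with hQdef
    have hQsub : ∀ c, Function.update W i0 (W i0 \ X) c ⊆ W c := by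
      intro c
      by_cases hc : c = i0
      · subst hc; rw [Function.update_self]; exact Set.diff_subset
      · rw [Function.update_of_ne hc]
    let ek : Fin k ≃ Option (Fin (k - 1)) := (finCongr h2).trans (finSuccEquiv (k - 1))
    have hQne : ∀ o, (Q' o).Nonempty := by
      rintro (_ | j)
      · exact ⟨t, htW0, htX⟩
      · by_cases hj : j = i0
        · refine ⟨s, ?_⟩
          show s ∈ Function.update W i0 (W i0 \ X) j
          rw [hj, Function.update_self]; exact ⟨hsW0, hsX⟩
        · refine (hWne j).imp (fun x hx => ?_)
          show x ∈ Function.update W i0 (W i0 \ X) j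
          rw [Function.update_of_ne hj]; exact hx
    have hQdisj : ∀ o1 o2 : Option (Fin (k - 1)), o1 ≠ o2 → Disjoint (Q' o1) (Q' o2) := by
      have hnone : ∀ b, Disjoint (Q' none) (Q' (some b)) := by
        intro b
        by_cases hb : b = i0
        · show Disjoint (W i0 ∩ X) (Function.update W i0 (W i0 \ X) b)
          rw [hb, Function.update_self]
          exact Set.disjoint_left.mpr (fun x hx1 hx2 => hx2.2 hx1.2)
        · exact ((hWdisj i0 b (fun h => hb h.symm)).mono Set.inter_subset_left (hQsub b))
      rintro (_ | a) (_ | b) h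
      · exact absurd rfl h
      · exact hnone b
      · exact (hnone a).symm
      · refine (hWdisj a b (fun hab => h (by rw [hab]))).mono (hQsub a) (hQsub b)
    have hQcover : (⋃ o, Q' o) = Set.univ := by
      apply Set.eq_univ_of_forall
      intro x
      have hx : x ∈ ⋃ i, W i := hWcover ▸ Set.mem_univ x
      rw [Set.mem_iUnion] at hx
      obtain ⟨j, hj⟩ := hx
      rw [Set.mem_iUnion]
      by_cases hji : j = i0
      · rw [hji] at hj
        by_cases hxX : x ∈ X
        · exact ⟨none, hj, hxX⟩
        · refine ⟨some j, ?_⟩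
          show x ∈ Function.update W i0 (W i0 \ X) j
          rw [hji, Function.update_self]; exact ⟨hj, hxX⟩
      · refine ⟨some j, ?_⟩
        show x ∈ Function.update W i0 (W i0 \ X) j
        rw [Function.update_of_ne hji]; exact hj
    have hQsep : ∀ o, ¬ (s ∈ Q' o ∧ t ∈ Q' o) := by
      rintro (_ | j) ⟨hs', ht'⟩
      · exact hsX hs'.2
      · by_cases hj : j = i0
        · have ht'' : t ∈ Function.update W i0 (W i0 \ X) j := ht'
          rw [hj, Function.update_self] at ht''
          exact ht''.2 htX
        · have : s ∈ W j := hQsub j hs'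
          exact Set.disjoint_left.mp (hWdisj j i0 hj) this hsW0
    have hQmin := hmin (fun i => Q' (ek i)) (fun i => hQne _)
      (fun i j hij => hQdisj _ _ (fun h => hij (ek.injective h)))
      (by rw [ek.surjective.iUnion_comp]; exact hQcover)
      (fun i => hQsep (ek i))
    have e1 : cutVal G (fun i => Q' (ek i)) = cutVal G Q' := cutVal_reindex G ek Q'
    have hsub2 : {e : Sym2 V | e ∈ G.edgeSet ∧ ¬ ∃ o, ∀ v ∈ e, v ∈ Q' o} ⊆ WX ∪ A := by
      rintro e ⟨he, hne'⟩
      by_cases hW : ∃ j, ∀ v ∈ e, v ∈ W j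
      · obtain ⟨j, hj⟩ := hW
        right
        by_cases hji : j = i0
        · rw [hji] at hj
          refine ⟨he, hj, ?_, ?_⟩
          · by_contra hcon
            push_neg at hcon
            refine hne' ⟨some i0, fun v hv => ?_⟩
            show v ∈ Function.update W i0 (W i0 \ X) i0
            rw [Function.update_self]; exact ⟨hj v hv, hcon v hv⟩
          · by_contra hcon
            push_neg at hcon
            exact hne' ⟨none, fun v hv => ⟨hj v hv, hcon v hv⟩⟩
        · refine absurd ?_ hne'
          refine ⟨some j, fun v hv => ?_⟩
          show v ∈ Function.update W i0 (W i0 \ X) j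
          rw [Function.update_of_ne hji]; exact hj v hv
      · exact Or.inl ⟨he, hW⟩
    calc Γ.ncard ≤ cutVal G (fun i => Q' (ek i)) := hQmin
      _ = cutVal G Q' := e1
      _ ≤ (WX ∪ A).ncard := Set.ncard_le_ncard hsub2 (Set.toFinite _)
      _ ≤ WX.ncard + A.ncard := Set.ncard_union_le _ _
      _ = μ + A.ncard := by rw [hWXμ]
  -- the two instantiations
  set At := {e : Sym2 V | e ∈ G.edgeSet ∧ (∀ v ∈ e, v ∈ W i0) ∧
      (∃ v ∈ e, v ∈ Vt) ∧ (∃ v ∈ e, v ∉ Vt)} with hAtdef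
  set As := {e : Sym2 V | e ∈ G.edgeSet ∧ (∀ v ∈ e, v ∈ W i0) ∧
      (∃ v ∈ e, v ∈ Vsᶜ) ∧ (∃ v ∈ e, v ∉ Vsᶜ)} with hAsdef
  have keyt : Γ.ncard ≤ μ + At.ncard := key Vt ht hsnt
  have keys : Γ.ncard ≤ μ + As.ncard := key Vsᶜ htns (fun h => h hs)
  set B := {e : Sym2 V | e ∈ G.edgeSet ∧ (∀ v ∈ e, v ∈ W i0) ∧
      (∃ v ∈ e, v ∈ Vt) ∧ (∃ v ∈ e, v ∈ Vs)} with hBdef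
  -- membership in a P-part from the cover, for vertices outside Vs ∪ Vt
  have hP : ∀ x : V, x ∉ Vs → x ∉ Vt → ∃ i, x ∈ P i := by
    intro x hx1 hx2
    have : x ∈ (⋃ i, P i) ∪ Vs ∪ Vt := hcover ▸ Set.mem_univ x
    rcases this with (h | h) | h
    · exact Set.mem_iUnion.mp h
    · exact absurd h hx1
    · exact absurd h hx2
  have c1 : m ⊆ Γ := by
    rintro e ⟨he, hno⟩
    refine ⟨he, ?_⟩
    rintro ⟨i, hi⟩
    apply hno
    rcases i with p | b
    · exact ⟨some p, hi⟩
    · refine ⟨none, fun v hv => ?_⟩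
      rcases b with _ | _
      · exact Or.inl (by simpa [hFdef] using hi v hv)
      · exact Or.inr (by simpa [hFdef] using hi v hv)
  have c3 : Disjoint B m := by
    rw [Set.disjoint_left]
    rintro e ⟨he, hei, ⟨u, hue, huVt⟩, ⟨w, hwe, hwVs⟩⟩ ⟨_, hno⟩
    apply hno
    refine ⟨none, fun v hv => ?_⟩
    have huw : u ≠ w := fun h => (Set.disjoint_left.mp hdisjst hwVs) (h ▸ huVt)
    have := (Sym2.mem_and_mem_iff huw).mp ⟨hue, hwe⟩
    rw [this, Sym2.mem_iff] at hv
    rcases hv with rfl | rfl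
    · exact Or.inr huVt
    · exact Or.inl hwVs
  have c2t : At ⊆ B ∪ (At ∩ m) := by
    rintro e ⟨he, hei, ⟨u, hue, huX⟩, ⟨w, hwe, hwX⟩⟩
    by_cases hB : e ∈ B
    · exact Or.inl hB
    · refine Or.inr ⟨⟨he, hei, ⟨u, hue, huX⟩, ⟨w, hwe, hwX⟩⟩, he, ?_⟩
      rintro ⟨o, ho⟩
      rcases o with _ | i
      · rcases ho w hwe with hwVs | hwVt
        · exact hB ⟨he, hei, ⟨u, hue, huX⟩, ⟨w, hwe, hwVs⟩⟩
        · exact hwX hwVt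
      · exact Set.disjoint_left.mp (hdisjPt i) (ho u hue) huX
  have c2s : As ⊆ B ∪ (As ∩ m) := by
    rintro e ⟨he, hei, ⟨u, hue, huX⟩, ⟨w, hwe, hwX⟩⟩
    have hwVs : w ∈ Vs := not_not.mp hwX
    by_cases hB : e ∈ B
    · exact Or.inl hB
    · refine Or.inr ⟨⟨he, hei, ⟨u, hue, huX⟩, ⟨w, hwe, hwX⟩⟩, he, ?_⟩
      rintro ⟨o, ho⟩
      rcases o with _ | i
      · rcases ho u hue with huVs | huVt
        · exact huX huVs
        · exact hB ⟨he, hei, ⟨u, hue, huVt⟩, ⟨w, hwe, hwVs⟩⟩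
      · exact Set.disjoint_left.mp (hdisjPs i) (ho w hwe) hwVs
  have c4 : Disjoint (At ∩ m) (As ∩ m) := by
    rw [Set.disjoint_left]
    rintro e ⟨⟨he, hei, ⟨u, hue, huVt⟩, _⟩, hem⟩ ⟨⟨_, _, _, ⟨w, hwe, hwX⟩⟩, _⟩
    have hwVs : w ∈ Vs := not_not.mp hwX
    exact Set.disjoint_left.mp c3 ⟨he, hei, ⟨u, hue, huVt⟩, ⟨w, hwe, hwVs⟩⟩ hem
  have c5 : B ∪ m ⊆ Γ := by
    rintro e (⟨he, hei, ⟨u, hue, huVt⟩, ⟨w, hwe, hwVs⟩⟩ | hem)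
    · refine ⟨he, ?_⟩
      rintro ⟨i, hi⟩
      rcases i with p | b
      · exact Set.disjoint_left.mp (hdisjPt p) (hi u hue) huVt
      · rcases b with _ | _
        · exact (Set.disjoint_left.mp hdisjst (by simpa [hFdef] using hi u hue)) huVt
        · exact (Set.disjoint_left.mp hdisjst hwVs) (by simpa [hFdef] using hi w hwe)
    · exact c1 hem
  -- counting
  have h4 : At.ncard ≤ B.ncard + (At ∩ m).ncard :=
    le_trans (Set.ncard_le_ncard c2t (Set.toFinite _)) (Set.ncard_union_le _ _)
  have h5 : As.ncard ≤ B.ncard + (As ∩ m).ncard :=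
    le_trans (Set.ncard_le_ncard c2s (Set.toFinite _)) (Set.ncard_union_le _ _)
  have h6 : (At ∩ m).ncard + (As ∩ m).ncard ≤ m.ncard := by
    rw [← Set.ncard_union_eq c4 (Set.toFinite _) (Set.toFinite _)]
    exact Set.ncard_le_ncard
      (Set.union_subset Set.inter_subset_right Set.inter_subset_right) (Set.toFinite _)
  have h7 : B.ncard + m.ncard ≤ Γ.ncard := by
    rw [← Set.ncard_union_eq c3 (Set.toFinite _) (Set.toFinite _)]
    exact Set.ncard_le_ncard c5 (Set.toFinite _)
  show m.ncard ≤ 2 * μ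
  omega
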